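/- The function V_m(t) = (1−e^{−t})²·e^{2e^{−t}−2}·e^{−mt} satisfies, for every m ≥ 1, the evolution equation dV_m/dt = −m·V_m + 2·∑_{n≥m+2} V_n, with lim_{t→0} t^{−2}·e^{mt}·V_m(t) = 1. Consequently π₀(t) = ∑_{m≥1} m·V_m(t) = e^{−t}·e^{2e^{−t}−2}. -/

import Mathlib

open Real Filter

/-- Void density for model B random sequential covering of ℤ by trimers:
`V_m(t) = (1-e^{-t})² e^{2e^{-t}-2} e^{-mt}`. -/
noncomputable def trimerVoidB (m : ℕ) (t : ℝ) : ℝ :=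
  (1 - Real.exp (-t)) ^ 2 * Real.exp (2 * Real.exp (-t) - 2) * Real.exp (-(m : ℝ) * t)

lemma trimer_tsum_tail (m : ℕ) {t : ℝ} (ht : 0 < t) :
    ∑' k : ℕ, trimerVoidB (m + 2 + k) t
      = (1 - Real.exp (-t)) * Real.exp (2 * Real.exp (-t) - 2)
        * Real.exp (-(m : ℝ) * t) * Real.exp (-t) ^ 2 := by
  have hu0 : 0 ≤ Real.exp (-t) := (Real.exp_pos _).le
  have hu1 : Real.exp (-t) < 1 := by
    rw [Real.exp_lt_one_iff]; linarith
  have hrw : ∀ k : ℕ, trimerVoidB (m + 2 + k) t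
      = ((1 - Real.exp (-t)) ^ 2 * Real.exp (2 * Real.exp (-t) - 2)
          * Real.exp (-(m : ℝ) * t) * Real.exp (-t) ^ 2) * Real.exp (-t) ^ k := by
    intro k
    unfold trimerVoidB
    rw [show (-(((m : ℕ) + 2 + k : ℕ) : ℝ) * t) = (-(m:ℝ)*t) + (-t + -t) + (k : ℝ) * (-t) by
      push_cast; ring]
    rw [Real.exp_add, Real.exp_add, Real.exp_add, Real.exp_nat_mul]
    ring
  rw [tsum_congr hrw, tsum_mul_left, tsum_geometric_of_lt_one hu0 hu1]
  have h1u : (1 : ℝ) - Real.exp (-t) ≠ 0 := by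
    intro h; nlinarith
  field_simp

/-- `V_m(t) = (1-e^{-t})² e^{2e^{-t}-2} e^{-mt}` satisfies, for every `m ≥ 1`, the model B
trimer evolution equation `dV_m/dt = -m V_m + 2 ∑_{n≥m+2} V_n` with `t⁻² e^{mt} V_m(t) → 1`
as `t → 0⁺`; consequently the uncovered density is
`π₀(t) = ∑_{m≥1} m V_m(t) = e^{-t} e^{2e^{-t}-2}`. -/
theorem trimer_modelB_voids :
    (∀ m : ℕ, 1 ≤ m →
      (∀ t : ℝ, 0 < t →
        HasDerivAt (trimerVoidB m)
          (-(m : ℝ) * trimerVoidB m t + 2 * ∑' k : ℕ, trimerVoidB (m + 2 + k) t) t) ∧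
      Tendsto (fun t : ℝ => trimerVoidB m t * Real.exp ((m : ℝ) * t) / t ^ 2)
        (nhdsWithin 0 (Set.Ioi 0)) (nhds 1)) ∧
    (∀ t : ℝ, 0 < t →
      ∑' n : ℕ, ((n : ℝ) + 1) * trimerVoidB (n + 1) t
        = Real.exp (-t) * Real.exp (2 * Real.exp (-t) - 2)) := by
  constructor
  · intro m _
    constructor
    · intro t ht
      rw [trimer_tsum_tail m ht]
      -- build the derivative
      have hneg : HasDerivAt (fun t : ℝ => -t) (-1) t := (hasDerivAt_id t).neg
      have hu : HasDerivAt (fun t : ℝ => Real.exp (-t)) (-Real.exp (-t)) t := by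
        simpa [Function.comp_def] using (Real.hasDerivAt_exp (-t)).comp t hneg
      have h1 : HasDerivAt (fun t : ℝ => (1 - Real.exp (-t)) ^ 2)
          (2 * (1 - Real.exp (-t)) * Real.exp (-t)) t := by
        have := ((hasDerivAt_const t (1:ℝ)).fun_sub hu).fun_pow 2
        simpa using this.congr_deriv (by ring)
      have h2 : HasDerivAt (fun t : ℝ => Real.exp (2 * Real.exp (-t) - 2))
          (-2 * Real.exp (-t) * Real.exp (2 * Real.exp (-t) - 2)) t := by
        have hin : HasDerivAt (fun t : ℝ => 2 * Real.exp (-t) - 2)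
            (-2 * Real.exp (-t)) t := by
          simpa using ((hu.const_mul 2).fun_sub (hasDerivAt_const t (2:ℝ))).congr_deriv (g' := -2 * Real.exp (-t)) (by ring)
        simpa [mul_comm, Function.comp_def] using (Real.hasDerivAt_exp _).comp t hin
      have h3 : HasDerivAt (fun t : ℝ => Real.exp (-(m : ℝ) * t))
          (-(m : ℝ) * Real.exp (-(m : ℝ) * t)) t := by
        have hin : HasDerivAt (fun t : ℝ => -(m : ℝ) * t) (-(m : ℝ)) t := by
          simpa using (hasDerivAt_id t).const_mul (-(m : ℝ))
        simpa [mul_comm, Function.comp_def] using (Real.hasDerivAt_exp _).comp t hin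
      have := (h1.fun_mul h2).fun_mul h3
      unfold trimerVoidB
      refine this.congr_deriv ?_
      ring
    · -- limit
      have h1 : Tendsto (fun t : ℝ => (1 - Real.exp (-t)) / t)
          (nhdsWithin 0 (Set.Ioi 0)) (nhds 1) := by
        have hd : HasDerivAt (fun t : ℝ => 1 - Real.exp (-t)) 1 0 := by
          have hneg : HasDerivAt (fun t : ℝ => -t) (-1) 0 := (hasDerivAt_id 0).neg
          have hu : HasDerivAt (fun t : ℝ => Real.exp (-t)) (-1) 0 := by
            simpa [Function.comp_def] using (Real.hasDerivAt_exp (-0:ℝ)).comp 0 hneg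
          simpa using (hasDerivAt_const (0:ℝ) (1:ℝ)).fun_sub hu
        have := hd.tendsto_slope_zero_right
        simpa [div_eq_inv_mul] using this
      have h2 : Tendsto (fun t : ℝ => Real.exp (2 * Real.exp (-t) - 2))
          (nhdsWithin 0 (Set.Ioi 0)) (nhds 1) := by
        have : ContinuousAt (fun t : ℝ => Real.exp (2 * Real.exp (-t) - 2)) 0 := by
          fun_prop
        have := this.continuousWithinAt (s := Set.Ioi 0)
        simpa using this.tendsto
      have := (h1.mul h1).mul h2
      rw [one_mul, one_mul] at this
      refine this.congr' ?_
      filter_upwards [self_mem_nhdsWithin] with t (ht : 0 < t)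
      unfold trimerVoidB
      have hexp : Real.exp (-(m : ℝ) * t) * Real.exp ((m : ℝ) * t) = 1 := by
        rw [← Real.exp_add]; simp
      conv_rhs => rw [mul_assoc, hexp, mul_one]
      have ht' : t ≠ 0 := ne_of_gt ht
      field_simp
  · intro t ht
    have hu0 : 0 ≤ Real.exp (-t) := (Real.exp_pos _).le
    have hu1 : Real.exp (-t) < 1 := by rw [Real.exp_lt_one_iff]; linarith
    have hnorm : ‖Real.exp (-t)‖ < 1 := by rwa [Real.norm_eq_abs, abs_of_nonneg hu0]
    set u := Real.exp (-t) with hu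
    set C := (1 - u) ^ 2 * Real.exp (2 * u - 2) with hC
    have hrw : ∀ n : ℕ, ((n : ℝ) + 1) * trimerVoidB (n + 1) t
        = (C * u) * (((n : ℝ) + 1) * u ^ n) := by
      intro n
      unfold trimerVoidB
      rw [show (-(((n : ℕ) + 1 : ℕ)) : ℝ) * t = -t + (n : ℝ) * (-t) by push_cast; ring]
      rw [Real.exp_add, Real.exp_nat_mul, ← hu]
      ring
    rw [tsum_congr hrw, tsum_mul_left]
    have hs1 : HasSum (fun n : ℕ => (n : ℝ) * u ^ n) (u / (1 - u) ^ 2) :=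
      hasSum_coe_mul_geometric_of_norm_lt_one hnorm
    have hs2 : HasSum (fun n : ℕ => u ^ n) (1 / (1 - u)) := by
      simpa [one_div] using hasSum_geometric_of_lt_one hu0 hu1
    have heq : (fun n : ℕ => ((n : ℝ) + 1) * u ^ n)
        = fun n : ℕ => (n : ℝ) * u ^ n + u ^ n := by
      funext n; ring
    have hs : HasSum (fun n : ℕ => ((n : ℝ) + 1) * u ^ n)
        (u / (1 - u) ^ 2 + 1 / (1 - u)) := by
      rw [heq]; exact hs1.add hs2
    rw [hs.tsum_eq]
    have h1u : (1 : ℝ) - u ≠ 0 := by intro h; nlinarith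
    rw [hC]
    field_simp
    ring
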